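/- Let G be a graph and suppose that for some t, every induced bipartite subgraph of G with bipartition (A, B) admits a proper conflict-free coloring c in which at most t colors are used on A and at most t colors are used on B. Then χ_pcf(G) ≤ t^2 · χ(G). -/

import Mathlib

/-- The number of neighbors of `v` colored `t`. -/
noncomputable def nbrColorCount {V : Type*} {α : Type*} (G : SimpleGraph V) (c : V → α) (v : V) (t : α) : ℕ :=
  Nat.card {x // G.Adj v x ∧ c x = t}

/-- The set of witnesses of `v`: colors appearing an odd number of times among neighbors of `v`. -/
def witnessSet {V : Type*} {α : Type*} (G : SimpleGraph V) (c : V → α) (v : V) : Set α :=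
  {t | Odd (nbrColorCount G c v t)}

/-- A proper coloring. -/
def properColoring {V : Type*} {α : Type*} (G : SimpleGraph V) (c : V → α) : Prop :=
  ∀ ⦃u v⦄, G.Adj u v → c u ≠ c v

/-- A conflict-free coloring. -/
def conflictFree {V : Type*} {α : Type*} (G : SimpleGraph V) (c : V → α) : Prop :=
  ∀ v, (∃ x, G.Adj v x) → ∃ t, nbrColorCount G c v t = 1

/-- Auxiliary: the set of vertices assigned "witness class" `j` with tag `k`. -/
def auxA {V : Type*} (G : SimpleGraph V) {n : ℕ} (C : V → Fin n) (j : Fin n) (k : Bool) : Set V :=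
  if k then {v | j < C v ∧ (∃ u, G.Adj v u ∧ C u = j) ∧ ∀ u, G.Adj v u → C u ≤ j ∨ C v ≤ C u}
  else {v | C v < j ∧ (∃ u, G.Adj v u ∧ C u = j) ∧ ∀ u, G.Adj v u → j ≤ C u}

theorem stmt_18 {V : Type*} [Fintype V] [DecidableEq V] (G : SimpleGraph V) (t : ℕ)
    (hbip : ∀ A B : Set V, Disjoint A B →
      (∀ u ∈ A, ∀ v ∈ A, ¬ G.Adj u v) → (∀ u ∈ B, ∀ v ∈ B, ¬ G.Adj u v) →
      ∃ c : V → ℕ,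
        -- proper on the induced subgraph on `A ∪ B`
        (∀ u ∈ A ∪ B, ∀ v ∈ A ∪ B, G.Adj u v → c u ≠ c v) ∧
        -- conflict-free on the induced subgraph on `A ∪ B`
        (∀ v ∈ A ∪ B, (∃ x ∈ A ∪ B, G.Adj v x) →
          ∃ s, Nat.card {x // x ∈ A ∪ B ∧ G.Adj v x ∧ c x = s} = 1) ∧
        (c '' A).ncard ≤ t ∧ (c '' B).ncard ≤ t)
    (n : ℕ) (hchi : G.Colorable n) :
    ∃ c : V → Fin (t * t * n), properColoring G c ∧ conflictFree G c := by
  classical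
  obtain ⟨C⟩ := hchi
  by_cases hV : IsEmpty V
  · exact ⟨fun v => isEmptyElim v, by intro u v h; exact isEmptyElim u,
      by intro v; exact isEmptyElim v⟩
  rw [not_isEmpty_iff] at hV
  obtain ⟨v₀⟩ := hV
  -- t ≥ 1
  have ht : 1 ≤ t := by
    obtain ⟨c, -, -, h1, -⟩ := hbip {v₀} ∅ (Set.disjoint_empty _)
      (by rintro u rfl v rfl; exact G.loopless.irrefl _)
      (by intro u hu; exact absurd hu (Set.notMem_empty u))
    calc 1 = (c '' {v₀}).ncard := by rw [Set.image_singleton, Set.ncard_singleton]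
      _ ≤ t := h1
  set φ : V → Fin n := fun v => C v with hφ
  have hvalid : ∀ {u v : V}, G.Adj u v → φ u ≠ φ v := fun h => C.valid h
  -- independence of the pieces
  have hAindep : ∀ (j : Fin n) (k : Bool), ∀ u ∈ auxA G φ j k, ∀ v ∈ auxA G φ j k,
      ¬ G.Adj u v := by
    intro j k u hu v hv hadj
    cases k with
    | false =>
      simp only [auxA, if_false, Set.mem_setOf_eq, Bool.false_eq_true] at hu hv
      exact absurd (hv.2.2 u hadj.symm) (not_le.mpr hu.1)
    | true =>
      simp only [auxA, if_true, Set.mem_setOf_eq] at hu hv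
      rcases lt_trichotomy (φ u) (φ v) with h | h | h
      · rcases hv.2.2 u hadj.symm with h' | h'
        · exact absurd hu.1 (not_lt.mpr h')
        · exact absurd h (not_lt.mpr h')
      · exact hvalid hadj h
      · rcases hu.2.2 v hadj with h' | h'
        · exact absurd hv.1 (not_lt.mpr h')
        · exact absurd h (not_lt.mpr h')
  have hBindep : ∀ (j : Fin n), ∀ u ∈ {v | φ v = j}, ∀ w ∈ {v | φ v = j}, ¬ G.Adj u w := by
    intro j u hu w hw hadj
    exact hvalid hadj (hu.trans hw.symm)
  have hdisj : ∀ (j : Fin n) (k : Bool), Disjoint (auxA G φ j k) {v | φ v = j} := by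
    intro j k
    rw [Set.disjoint_left]
    intro v hv hv2
    cases k with
    | false =>
      simp only [auxA, if_false, Set.mem_setOf_eq, Bool.false_eq_true] at hv
      exact absurd hv2 (ne_of_lt hv.1)
    | true =>
      simp only [auxA, if_true, Set.mem_setOf_eq] at hv
      exact absurd hv2.symm (ne_of_lt hv.1)
  have hAnbr : ∀ (j : Fin n) (k : Bool), ∀ v ∈ auxA G φ j k, ∃ u, G.Adj v u ∧ φ u = j := by
    intro j k v hv
    cases k with
    | false =>
      simp only [auxA, if_false, Set.mem_setOf_eq, Bool.false_eq_true] at hv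
      exact hv.2.1
    | true =>
      simp only [auxA, if_true, Set.mem_setOf_eq] at hv
      exact hv.2.1
  -- key: per (j, k), a t-coloring of class j giving unique witnesses to vertices of auxA j k
  have key : ∀ (j : Fin n) (k : Bool), ∃ g : V → Fin t,
      ∀ v ∈ auxA G φ j k, ∃ x, G.Adj v x ∧ φ x = j ∧
        ∀ y, G.Adj v y → φ y = j → g y = g x → y = x := by
    intro j k
    obtain ⟨c, -, hcf, -, hB⟩ := hbip (auxA G φ j k) {v | φ v = j} (hdisj j k)
      (hAindep j k) (hBindep j)
    set F : Finset ℕ := (Finset.univ.filter (fun v => φ v = j)).image c with hF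
    have hFc : (c '' {v | φ v = j}) = ↑F := by
      ext x
      simp [hF, Set.mem_image]
    have hFcard : F.card ≤ t := by
      calc F.card = (c '' {v | φ v = j}).ncard := by rw [hFc, Set.ncard_coe_finset]
        _ ≤ t := hB
    obtain ⟨f⟩ : Nonempty ({x // x ∈ F} ↪ Fin t) := by
      apply Function.Embedding.nonempty_of_card_le
      simpa [Fintype.card_coe] using hFcard
    have hmem : ∀ v, φ v = j → c v ∈ F := by
      intro v hv
      simp only [hF, Finset.mem_image, Finset.mem_filter]
      exact ⟨v, ⟨Finset.mem_univ v, hv⟩, rfl⟩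
    refine ⟨fun v => if h : φ v = j then f ⟨c v, hmem v h⟩ else ⟨0, by omega⟩, ?_⟩
    intro v hv
    obtain ⟨u, hu, huj⟩ := hAnbr j k v hv
    obtain ⟨s, hs⟩ := hcf v (Or.inl hv) ⟨u, Or.inr huj, hu⟩
    rw [Nat.card_eq_one_iff_unique] at hs
    obtain ⟨hsub, ⟨⟨x, hxAB, hxadj, hxc⟩⟩⟩ := hs
    have hxj : φ x = j := by
      rcases hxAB with hxA | hxB
      · exact absurd hxadj (hAindep j k v hv x hxA)
      · exact hxB
    refine ⟨x, hxadj, hxj, ?_⟩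
    intro y hyadj hyj hgy
    simp only [dif_pos hyj, dif_pos hxj] at hgy
    have hcy : c y = c x := congrArg Subtype.val (f.injective hgy)
    have : (⟨y, Or.inr hyj, hyadj, hcy.trans hxc⟩ :
        {z // z ∈ auxA G φ j k ∪ {v | φ v = j} ∧ G.Adj v z ∧ c z = s}) =
        ⟨x, hxAB, hxadj, hxc⟩ := Subsingleton.elim _ _
    exact congrArg Subtype.val this
  -- coverage: every non-isolated vertex is in some auxA j k
  have hcover : ∀ v : V, (∃ x, G.Adj v x) → ∃ j k, v ∈ auxA G φ j k := by
    rintro v ⟨x, hx⟩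
    set S : Finset (Fin n) := (Finset.univ.filter (fun u => G.Adj v u)).image φ with hS
    have hmemS : ∀ u, G.Adj v u → φ u ∈ S := by
      intro u hu
      simp only [hS, Finset.mem_image, Finset.mem_filter]
      exact ⟨u, ⟨Finset.mem_univ u, hu⟩, rfl⟩
    have hSmem : ∀ i ∈ S, ∃ u, G.Adj v u ∧ φ u = i := by
      intro i hi
      simp only [hS, Finset.mem_image, Finset.mem_filter] at hi
      obtain ⟨u, ⟨-, hu⟩, hui⟩ := hi
      exact ⟨u, hu, hui⟩
    by_cases hlow : ∃ i ∈ S, i < φ v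
    · set T : Finset (Fin n) := S.filter (· < φ v) with hT
      have hTne : T.Nonempty := by
        obtain ⟨i, hi, hi2⟩ := hlow
        exact ⟨i, by simp [hT, hi, hi2]⟩
      set j := T.max' hTne with hj
      have hjT : j ∈ T := T.max'_mem hTne
      have hjS : j ∈ S := (Finset.mem_filter.mp hjT).1
      have hjlt : j < φ v := by
        have := (Finset.mem_filter.mp hjT).2
        simpa using this
      refine ⟨j, true, ?_⟩
      simp only [auxA, if_true, Set.mem_setOf_eq]
      refine ⟨hjlt, hSmem j hjS, ?_⟩
      intro u hu
      by_cases h : φ u < φ v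
      · left
        exact Finset.le_max' T (φ u) (by simp [hT, hmemS u hu, h])
      · right
        exact not_lt.mp h
    · push_neg at hlow
      set j := S.min' ⟨φ x, hmemS x hx⟩ with hj
      have hjS : j ∈ S := S.min'_mem _
      have hjgt : φ v < j := by
        have h1 : φ v ≤ j := hlow j hjS
        obtain ⟨u, hu, huj⟩ := hSmem j hjS
        have h2 : φ v ≠ j := fun h => hvalid hu (huj.trans h.symm).symm
        exact lt_of_le_of_ne h1 h2
      refine ⟨j, false, ?_⟩
      simp only [auxA, if_false, Set.mem_setOf_eq, Bool.false_eq_true]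
      refine ⟨hjgt, hSmem j hjS, ?_⟩
      intro u hu
      exact S.min'_le (φ u) (hmemS u hu)
  choose g hg using key
  let e1 : Fin t × Fin t ≃ Fin (t * t) := finProdFinEquiv
  let enc : (Fin t × Fin t) × Fin n ≃ Fin (t * t * n) :=
    (e1.prodCongr (Equiv.refl (Fin n))).trans finProdFinEquiv
  refine ⟨fun v => enc ((g (φ v) false v, g (φ v) true v), φ v), ?_, ?_⟩
  · intro u v huv h
    have h' := enc.injective h
    rw [Prod.mk.injEq, Prod.mk.injEq] at h'
    exact hvalid huv h'.2
  · intro v hv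
    obtain ⟨j, k, hvA⟩ := hcover v hv
    obtain ⟨x, hxadj, hxj, hxuniq⟩ := hg j k v hvA
    refine ⟨enc ((g (φ x) false x, g (φ x) true x), φ x), ?_⟩
    simp only [nbrColorCount]
    rw [Nat.card_eq_one_iff_unique]
    constructor
    · constructor
      intro ⟨a, ha1, ha2⟩ ⟨b, hb1, hb2⟩
      have hax : a = x := by
        have h' := enc.injective ha2
        rw [Prod.mk.injEq, Prod.mk.injEq] at h'
        obtain ⟨⟨hf, htr⟩, hC⟩ := h'
        have haj : φ a = j := hC.trans hxj
        rw [haj, hxj] at hf htr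
        cases k with
        | false => exact hxuniq a ha1 haj hf
        | true => exact hxuniq a ha1 haj htr
      have hbx : b = x := by
        have h' := enc.injective hb2
        rw [Prod.mk.injEq, Prod.mk.injEq] at h'
        obtain ⟨⟨hf, htr⟩, hC⟩ := h'
        have hbj : φ b = j := hC.trans hxj
        rw [hbj, hxj] at hf htr
        cases k with
        | false => exact hxuniq b hb1 hbj hf
        | true => exact hxuniq b hb1 hbj htr
      exact Subtype.ext (hax.trans hbx.symm)
    · exact ⟨⟨x, hxadj, rfl⟩⟩
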